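/- Let a ∈ ℝ and r ∈ ℝ with r ≠ 0. There is a 5-dimensional real Lie algebra 𝔤 with basis e₁,...,e₅ and dual basis e¹,...,e⁵ whose Chevalley–Eilenberg differentials satisfy (writing e^{ij} for eⁱ∧eʲ): de¹ = 0, de² = r e^{14} − r e^{23} − a r e^{25} + r² e^{35}, de³ = a e^{14} − a e^{23} − a² e^{25} + a r e^{35}, de⁴ = r e^{12} + a e^{13} − (a² + r²) e^{15} + a e^{24} − r e^{34}, de⁵ = −2e^{14} − 2e^{23} (i.e., the bracket determined by these equations satisfies the Jacobi identity). Moreover, 𝔤 is solvable, the quadruplet η = e⁵, ω₁ = e^{12} + e^{34}, ω₂ = e^{13} − e^{24}, ω₃ = e^{14} + e^{23} is a hypo-contact structure on 𝔤, and 𝔤 is isomorphic to 𝔥₄. -/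

import Mathlib

noncomputable section

/-- Chevalley–Eilenberg differential of a 1-form on a Lie algebra. -/
def dOne {V : Type*} [LieRing V] [LieAlgebra ℝ V] (α : V → ℝ) (x y : V) : ℝ :=
  -α ⁅x, y⁆

/-- Chevalley–Eilenberg differential of a 2-form on a Lie algebra. -/
def dTwo {V : Type*} [LieRing V] [LieAlgebra ℝ V] (ω : V → V → ℝ) (x y z : V) : ℝ :=
  -ω ⁅x, y⁆ z + ω ⁅x, z⁆ y - ω ⁅y, z⁆ x

/-- Chevalley–Eilenberg differential of a 3-form on a Lie algebra. -/
def dThree {V : Type*} [LieRing V] [LieAlgebra ℝ V] (σ : V → V → V → ℝ)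
    (x y z w : V) : ℝ :=
  -σ ⁅x, y⁆ z w + σ ⁅x, z⁆ y w - σ ⁅x, w⁆ y z
    - σ ⁅y, z⁆ x w + σ ⁅y, w⁆ x z - σ ⁅z, w⁆ x y

/-- Wedge product of two 1-forms, as an alternating bilinear map. -/
def wedge1 {V : Type*} [LieRing V] [LieAlgebra ℝ V] (α β : V →ₗ[ℝ] ℝ) :
    V →ₗ[ℝ] V →ₗ[ℝ] ℝ :=
  LinearMap.mk₂ ℝ (fun x y => α x * β y - α y * β x)
    (fun m₁ m₂ n => by simp [map_add]; ring)
    (fun c m n => by simp [map_smul, smul_eq_mul]; ring)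
    (fun m n₁ n₂ => by simp [map_add]; ring)
    (fun c m n => by simp [map_smul, smul_eq_mul]; ring)

/-- Wedge product of a 1-form and a 2-form. -/
def wedge12 {V : Type*} (α : V → ℝ) (ω : V → V → ℝ) (x y z : V) : ℝ :=
  α x * ω y z - α y * ω x z + α z * ω x y

/-- Wedge product of two 2-forms. -/
def wedge22 {V : Type*} (ω τ : V → V → ℝ) (x y z w : V) : ℝ :=
  ω x y * τ z w - ω x z * τ y w + ω x w * τ y z
    + ω y z * τ x w - ω y w * τ x z + ω z w * τ x y

/-- Wedge product of a 4-form and a 1-form. -/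
def wedge41 {V : Type*} (v : V → V → V → V → ℝ) (α : V → ℝ)
    (x₀ x₁ x₂ x₃ x₄ : V) : ℝ :=
  α x₀ * v x₁ x₂ x₃ x₄ - α x₁ * v x₀ x₂ x₃ x₄ + α x₂ * v x₀ x₁ x₃ x₄
    - α x₃ * v x₀ x₁ x₂ x₄ + α x₄ * v x₀ x₁ x₂ x₃

/-- An SU(2)-structure on a 5-dimensional real Lie algebra. -/
structure IsSU2Structure {V : Type*} [LieRing V] [LieAlgebra ℝ V]
    (η : V →ₗ[ℝ] ℝ) (ω₁ ω₂ ω₃ : V →ₗ[ℝ] V →ₗ[ℝ] ℝ) : Prop where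
  alt1 : ∀ x, ω₁ x x = 0
  alt2 : ∀ x, ω₂ x x = 0
  alt3 : ∀ x, ω₃ x x = 0
  vol : ∃ v : V → V → V → V → ℝ,
    wedge22 (fun a b => ω₁ a b) (fun a b => ω₁ a b) = v ∧
    wedge22 (fun a b => ω₂ a b) (fun a b => ω₂ a b) = v ∧
    wedge22 (fun a b => ω₃ a b) (fun a b => ω₃ a b) = v ∧
    wedge22 (fun a b => ω₁ a b) (fun a b => ω₂ a b) = (fun _ _ _ _ => 0) ∧
    wedge22 (fun a b => ω₁ a b) (fun a b => ω₃ a b) = (fun _ _ _ _ => 0) ∧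
    wedge22 (fun a b => ω₂ a b) (fun a b => ω₃ a b) = (fun _ _ _ _ => 0) ∧
    wedge41 v (fun x => η x) ≠ (fun _ _ _ _ _ => 0)
  compat : ∀ X Y : V, (∀ z, ω₃ X z = ω₁ Y z) → 0 ≤ ω₂ X Y

/-- A hypo-contact structure on a 5-dimensional real Lie algebra. -/
structure IsHypoContact {V : Type*} [LieRing V] [LieAlgebra ℝ V]
    (η : V →ₗ[ℝ] ℝ) (ω₁ ω₂ ω₃ : V →ₗ[ℝ] V →ₗ[ℝ] ℝ)
    extends IsSU2Structure η ω₁ ω₂ ω₃ : Prop where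
  contact : ∀ x y, dOne (fun z => η z) x y = -2 * ω₃ x y
  closed1 : ∀ x y z w, dThree (wedge12 (fun z => η z) (fun a b => ω₁ a b)) x y z w = 0
  closed2 : ∀ x y z w, dThree (wedge12 (fun z => η z) (fun a b => ω₂ a b)) x y z w = 0

/-- The Lie algebra `𝔥₁`. -/
def IsH1 (V : Type*) [LieRing V] [LieAlgebra ℝ V] : Prop :=
  ∃ X : Module.Basis (Fin 5) ℝ V,
    ⁅X 0, X 1⁆ = 0 ∧ ⁅X 0, X 2⁆ = 0 ∧ ⁅X 0, X 3⁆ = X 4 ∧ ⁅X 0, X 4⁆ = 0 ∧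
    ⁅X 1, X 2⁆ = X 4 ∧ ⁅X 1, X 3⁆ = 0 ∧ ⁅X 1, X 4⁆ = 0 ∧
    ⁅X 2, X 3⁆ = 0 ∧ ⁅X 2, X 4⁆ = 0 ∧ ⁅X 3, X 4⁆ = 0

/-- The Lie algebra `𝔥₂`. -/
def IsH2 (V : Type*) [LieRing V] [LieAlgebra ℝ V] : Prop :=
  ∃ X : Module.Basis (Fin 5) ℝ V,
    ⁅X 0, X 1⁆ = 0 ∧ ⁅X 0, X 2⁆ = 0 ∧ ⁅X 0, X 3⁆ = 0 ∧ ⁅X 0, X 4⁆ = (2 : ℝ) • X 0 ∧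
    ⁅X 1, X 2⁆ = X 0 ∧ ⁅X 1, X 3⁆ = 0 ∧ ⁅X 1, X 4⁆ = X 1 ∧
    ⁅X 2, X 3⁆ = 0 ∧ ⁅X 2, X 4⁆ = X 2 ∧ ⁅X 3, X 4⁆ = (-3 : ℝ) • X 3

/-- The Lie algebra `𝔥₃`. -/
def IsH3 (V : Type*) [LieRing V] [LieAlgebra ℝ V] : Prop :=
  ∃ X : Module.Basis (Fin 5) ℝ V,
    ⁅X 0, X 1⁆ = 0 ∧ ⁅X 0, X 2⁆ = 0 ∧ ⁅X 0, X 3⁆ = (2 : ℝ) • X 0 ∧ ⁅X 0, X 4⁆ = 0 ∧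
    ⁅X 1, X 2⁆ = X 0 ∧ ⁅X 1, X 3⁆ = X 1 ∧ ⁅X 1, X 4⁆ = -X 2 ∧
    ⁅X 2, X 3⁆ = X 2 ∧ ⁅X 2, X 4⁆ = X 1 ∧ ⁅X 3, X 4⁆ = 0

/-- The Lie algebra `𝔥₄`. -/
def IsH4 (V : Type*) [LieRing V] [LieAlgebra ℝ V] : Prop :=
  ∃ X : Module.Basis (Fin 5) ℝ V,
    ⁅X 0, X 1⁆ = 0 ∧ ⁅X 0, X 2⁆ = 0 ∧ ⁅X 0, X 3⁆ = X 0 ∧ ⁅X 0, X 4⁆ = 0 ∧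
    ⁅X 1, X 2⁆ = 0 ∧ ⁅X 1, X 3⁆ = 0 ∧ ⁅X 1, X 4⁆ = X 1 ∧
    ⁅X 2, X 3⁆ = -X 2 ∧ ⁅X 2, X 4⁆ = -X 2 ∧ ⁅X 3, X 4⁆ = 0

/-- The Lie algebra `𝔥₅`. -/
def IsH5 (V : Type*) [LieRing V] [LieAlgebra ℝ V] : Prop :=
  ∃ X : Module.Basis (Fin 5) ℝ V,
    ⁅X 0, X 1⁆ = 0 ∧ ⁅X 0, X 2⁆ = 0 ∧ ⁅X 0, X 3⁆ = 0 ∧ ⁅X 0, X 4⁆ = X 0 ∧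
    ⁅X 1, X 2⁆ = 0 ∧ ⁅X 1, X 3⁆ = X 0 ∧ ⁅X 1, X 4⁆ = 0 ∧
    ⁅X 2, X 3⁆ = X 1 ∧ ⁅X 2, X 4⁆ = -X 2 ∧ ⁅X 3, X 4⁆ = X 3

/-- `e^{ij}`, the wedge of the `i`-th and `j`-th dual basis 1-forms. -/
def bw {V : Type*} [LieRing V] [LieAlgebra ℝ V] (e : Module.Basis (Fin 5) ℝ V) (i j : Fin 5) :
    V →ₗ[ℝ] V →ₗ[ℝ] ℝ :=
  wedge1 (e.coord i) (e.coord j)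

/-- The content of Statement 5: structure equations, solvability, hypo-contact structure
and the isomorphism type, for a Lie algebra `V`. -/
def GoodLieAlgebra5 (a r : ℝ) (V : Type) [LieRing V] [LieAlgebra ℝ V] : Prop :=
  LieAlgebra.IsSolvable V ∧
  ∃ e : Module.Basis (Fin 5) ℝ V,
      (∀ x y : _, dOne (⇑(e.coord 0)) x y = 0) ∧
      (∀ x y : _, dOne (⇑(e.coord 1)) x y = (r) * bw e 0 3 x y + (-r) * bw e 1 2 x y + (-a*r) * bw e 1 4 x y + (r^2) * bw e 2 4 x y) ∧
      (∀ x y : _, dOne (⇑(e.coord 2)) x y = (a) * bw e 0 3 x y + (-a) * bw e 1 2 x y + (-a^2) * bw e 1 4 x y + (a*r) * bw e 2 4 x y) ∧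
      (∀ x y : _, dOne (⇑(e.coord 3)) x y = (r) * bw e 0 1 x y + (a) * bw e 0 2 x y + (-(a^2+r^2)) * bw e 0 4 x y + (a) * bw e 1 3 x y + (-r) * bw e 2 3 x y) ∧
      (∀ x y : _, dOne (⇑(e.coord 4)) x y = (-2) * bw e 0 3 x y + (-2) * bw e 1 2 x y) ∧
      IsHypoContact (e.coord 4) (bw e 0 1 + bw e 2 3) (bw e 0 2 - bw e 1 3) (bw e 0 3 + bw e 1 2) ∧
      IsH4 V



def L (_a _r : ℝ) : Type := Fin 5 → ℝ

namespace L
variable {a r : ℝ}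

instance : AddCommGroup (L a r) := inferInstanceAs (AddCommGroup (Fin 5 → ℝ))
instance : Module ℝ (L a r) := inferInstanceAs (Module ℝ (Fin 5 → ℝ))

@[simp] lemma add_apply (x y : L a r) (i : Fin 5) : (x + y) i = x i + y i := rfl
@[simp] lemma smul_apply (c : ℝ) (x : L a r) (i : Fin 5) : (c • x) i = c * x i := rfl
@[simp] lemma neg_apply (x : L a r) (i : Fin 5) : (-x) i = -(x i) := rfl
@[simp] lemma zero_apply (i : Fin 5) : (0 : L a r) i = 0 := rfl
@[simp] lemma sub_apply (x y : L a r) (i : Fin 5) : (x - y) i = x i - y i := rfl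

def br (a r : ℝ) (x y : L a r) : L a r := fun k =>
  match k with
  | 0 => 0
  | 1 => -r*(x 0*y 3 - x 3*y 0) + r*(x 1*y 2 - x 2*y 1) + a*r*(x 1*y 4 - x 4*y 1)
          - r^2*(x 2*y 4 - x 4*y 2)
  | 2 => -a*(x 0*y 3 - x 3*y 0) + a*(x 1*y 2 - x 2*y 1) + a^2*(x 1*y 4 - x 4*y 1)
          - a*r*(x 2*y 4 - x 4*y 2)
  | 3 => -r*(x 0*y 1 - x 1*y 0) - a*(x 0*y 2 - x 2*y 0) + (a^2+r^2)*(x 0*y 4 - x 4*y 0)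
          - a*(x 1*y 3 - x 3*y 1) + r*(x 2*y 3 - x 3*y 2)
  | 4 => 2*(x 0*y 3 - x 3*y 0) + 2*(x 1*y 2 - x 2*y 1)

@[simp] lemma br0 (x y : L a r) : br a r x y 0 = 0 := rfl
@[simp] lemma br1 (x y : L a r) : br a r x y 1 =
    -r*(x 0*y 3 - x 3*y 0) + r*(x 1*y 2 - x 2*y 1) + a*r*(x 1*y 4 - x 4*y 1)
      - r^2*(x 2*y 4 - x 4*y 2) := rfl
@[simp] lemma br2 (x y : L a r) : br a r x y 2 =
    -a*(x 0*y 3 - x 3*y 0) + a*(x 1*y 2 - x 2*y 1) + a^2*(x 1*y 4 - x 4*y 1)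
      - a*r*(x 2*y 4 - x 4*y 2) := rfl
@[simp] lemma br3 (x y : L a r) : br a r x y 3 =
    -r*(x 0*y 1 - x 1*y 0) - a*(x 0*y 2 - x 2*y 0) + (a^2+r^2)*(x 0*y 4 - x 4*y 0)
      - a*(x 1*y 3 - x 3*y 1) + r*(x 2*y 3 - x 3*y 2) := rfl
@[simp] lemma br4 (x y : L a r) : br a r x y 4 =
    2*(x 0*y 3 - x 3*y 0) + 2*(x 1*y 2 - x 2*y 1) := rfl

instance : LieRing (L a r) where
  bracket := br a r
  add_lie x y z := by funext k; fin_cases k <;> simp <;> ring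
  lie_add x y z := by funext k; fin_cases k <;> simp <;> ring
  lie_self x := by funext k; fin_cases k <;> simp <;> ring
  leibniz_lie x y z := by funext k; fin_cases k <;> simp <;> ring

instance : LieAlgebra ℝ (L a r) where
  lie_smul c x y := by
    funext k
    change L.br a r x (c • y) k = (c • L.br a r x y) k
    fin_cases k <;> simp <;> ring

@[simp] lemma bracket_apply (x y : L a r) : ⁅x, y⁆ = br a r x y := rfl

end L

namespace L
variable {a r : ℝ}

def eEquiv (a r : ℝ) : L a r ≃ₗ[ℝ] (Fin 5 → ℝ) where
  toFun x := x
  invFun x := x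
  map_add' _ _ := rfl
  map_smul' _ _ := rfl
  left_inv _ := rfl
  right_inv _ := rfl

def eB (a r : ℝ) : Module.Basis (Fin 5) ℝ (L a r) := Module.Basis.ofEquivFun (eEquiv a r)

@[simp] lemma coord_apply (i : Fin 5) (x : L a r) : (eB a r).coord i x = x i := rfl

@[simp] lemma eB_apply (i j : Fin 5) : eB a r i j = if j = i then 1 else 0 := by
  have : eB a r i = (eEquiv a r).symm (Pi.single i 1) := by
    rw [eB, Module.Basis.coe_ofEquivFun]
  rw [this]
  show (Pi.single i 1 : Fin 5 → ℝ) j = _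
  simp [Pi.single_apply]

/-- The key ideal used in the solvability proof. -/
def I (a r : ℝ) : LieIdeal ℝ (L a r) where
  carrier := {x : L a r | x 0 = 0 ∧ a * x 1 = r * x 2}
  add_mem' := by
    rintro x y ⟨hx0, hx1⟩ ⟨hy0, hy1⟩
    refine ⟨by simp [hx0, hy0], by simp; linarith⟩
  zero_mem' := by exact ⟨rfl, by simp⟩
  smul_mem' := by
    rintro c x ⟨hx0, hx1⟩
    refine ⟨by simp [hx0], by simp; linear_combination c * hx1⟩
  lie_mem := by
    rintro x m ⟨hm0, hm1⟩
    refine ⟨rfl, ?_⟩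
    show a * br a r x m 1 = r * br a r x m 2
    simp; ring

lemma mem_I (x : L a r) : x ∈ I a r ↔ x 0 = 0 ∧ a * x 1 = r * x 2 := Iff.rfl

lemma solvable (hr : r ≠ 0) : LieAlgebra.IsSolvable (L a r) := by
  rw [LieAlgebra.isSolvable_iff ℝ]
  refine ⟨2, ?_⟩
  have h1 : LieAlgebra.derivedSeries ℝ (L a r) 1 ≤ I a r := by
    rw [LieAlgebra.derivedSeries_def, LieAlgebra.derivedSeriesOfIdeal_succ,
      LieAlgebra.derivedSeriesOfIdeal_zero, LieSubmodule.lieIdeal_oper_eq_span,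
      LieSubmodule.lieSpan_le]
    rintro m ⟨x, n, rfl⟩
    refine ⟨rfl, ?_⟩
    show a * br a r x n 1 = r * br a r x n 2
    simp; ring
  have h2 : LieAlgebra.derivedSeries ℝ (L a r) 2 ≤ ⁅I a r, I a r⁆ := by
    rw [show (2 : ℕ) = 1 + 1 from rfl, LieAlgebra.derivedSeries_def,
      LieAlgebra.derivedSeriesOfIdeal_succ]
    exact LieSubmodule.mono_lie h1 h1
  have h3 : ⁅I a r, I a r⁆ = (⊥ : LieIdeal ℝ (L a r)) := by
    rw [LieSubmodule.lie_eq_bot_iff]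
    rintro x ⟨hx0, hx1⟩ y ⟨hy0, hy1⟩
    have hx2 : x 2 = a * x 1 / r := by field_simp; linarith
    have hy2 : y 2 = a * y 1 / r := by field_simp; linarith
    show br a r x y = 0
    funext k
    fin_cases k <;> simp [hx0, hy0, hx2, hy2] <;> field_simp <;> ring
  exact le_bot_iff.mp (h2.trans h3.le)

end L

namespace L
variable {a r : ℝ}

def qq (a r : ℝ) : ℝ := Real.sqrt (3*(a^2+r^2))

lemma qq_pos (hr : r ≠ 0) : 0 < qq a r := by
  have : (0:ℝ) < 3*(a^2+r^2) := by positivity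
  exact Real.sqrt_pos.mpr this

lemma qq_sq (hr : r ≠ 0) : qq a r ^ 2 = 3*(a^2+r^2) := by
  rw [qq, Real.sq_sqrt]; positivity

def fMap (a r : ℝ) (x : L a r) : L a r := fun k =>
  match k with
  | 0 => (x 3 - x 4)/(2*qq a r)
  | 1 => r*(x 0 + x 1 + x 2) + a*(x 3 + x 4)/(2*(a^2+r^2))
  | 2 => a*(x 0 + x 1 + x 2) - r*(x 3 + x 4)/(2*(a^2+r^2))
  | 3 => qq a r*(x 0 - x 1)
  | 4 => -2*(x 0 + x 1) + x 2

def gMap (a r : ℝ) (x : L a r) : L a r := fun k =>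
  match k with
  | 0 => (r*x 1 + a*x 2)/(6*(a^2+r^2)) + x 3/(2*qq a r) - x 4/6
  | 1 => (r*x 1 + a*x 2)/(6*(a^2+r^2)) - x 3/(2*qq a r) - x 4/6
  | 2 => 2*(r*x 1 + a*x 2)/(3*(a^2+r^2)) + x 4/3
  | 3 => qq a r*x 0 + a*x 1 - r*x 2
  | 4 => -(qq a r)*x 0 + a*x 1 - r*x 2

@[simp] lemma fMap0 (x : L a r) : fMap a r x 0 = (x 3 - x 4)/(2*qq a r) := rfl
@[simp] lemma fMap1 (x : L a r) : fMap a r x 1 = r*(x 0 + x 1 + x 2) + a*(x 3 + x 4)/(2*(a^2+r^2)) := rfl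
@[simp] lemma fMap2 (x : L a r) : fMap a r x 2 = a*(x 0 + x 1 + x 2) - r*(x 3 + x 4)/(2*(a^2+r^2)) := rfl
@[simp] lemma fMap3 (x : L a r) : fMap a r x 3 = qq a r*(x 0 - x 1) := rfl
@[simp] lemma fMap4 (x : L a r) : fMap a r x 4 = -2*(x 0 + x 1) + x 2 := rfl
@[simp] lemma gMap0 (x : L a r) : gMap a r x 0 = (r*x 1 + a*x 2)/(6*(a^2+r^2)) + x 3/(2*qq a r) - x 4/6 := rfl
@[simp] lemma gMap1 (x : L a r) : gMap a r x 1 = (r*x 1 + a*x 2)/(6*(a^2+r^2)) - x 3/(2*qq a r) - x 4/6 := rfl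
@[simp] lemma gMap2 (x : L a r) : gMap a r x 2 = 2*(r*x 1 + a*x 2)/(3*(a^2+r^2)) + x 4/3 := rfl
@[simp] lemma gMap3 (x : L a r) : gMap a r x 3 = qq a r*x 0 + a*x 1 - r*x 2 := rfl
@[simp] lemma gMap4 (x : L a r) : gMap a r x 4 = -(qq a r)*x 0 + a*x 1 - r*x 2 := rfl

lemma gf (hr : r ≠ 0) (x : L a r) : gMap a r (fMap a r x) = x := by
  have hq := (qq_pos (a := a) hr).ne'
  have hs : a^2+r^2 ≠ 0 := by positivity
  funext k; fin_cases k <;> simp <;> field_simp <;> ring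

lemma fg (hr : r ≠ 0) (x : L a r) : fMap a r (gMap a r x) = x := by
  have hq := (qq_pos (a := a) hr).ne'
  have hs : a^2+r^2 ≠ 0 := by positivity
  funext k; fin_cases k <;> simp <;> field_simp <;> ring

set_option maxHeartbeats 1000000 in
def hEquiv (a r : ℝ) (hr : r ≠ 0) : L a r ≃ₗ[ℝ] L a r where
  toFun := fMap a r
  invFun := gMap a r
  map_add' x y := by funext k; fin_cases k <;> simp <;> ring
  map_smul' c x := by funext k; fin_cases k <;> simp <;> ring
  left_inv x := gf hr x
  right_inv x := fg hr x

end L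

namespace L
variable {a r : ℝ}

def Xv (a r : ℝ) : Fin 5 → L a r := fun i =>
  match i with
  | 0 => fun k => match k with | 0 => (0) | 1 => (r) | 2 => (a) | 3 => (qq a r) | 4 => (-2)
  | 1 => fun k => match k with | 0 => (0) | 1 => (r) | 2 => (a) | 3 => (-qq a r) | 4 => (-2)
  | 2 => fun k => match k with | 0 => (0) | 1 => (r) | 2 => (a) | 3 => (0) | 4 => (1)
  | 3 => fun k => match k with | 0 => (1/(2*qq a r)) | 1 => (a/(2*(a^2+r^2))) | 2 => (-r/(2*(a^2+r^2))) | 3 => (0) | 4 => (0)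
  | 4 => fun k => match k with | 0 => (-1/(2*qq a r)) | 1 => (a/(2*(a^2+r^2))) | 2 => (-r/(2*(a^2+r^2))) | 3 => (0) | 4 => (0)

@[simp] lemma Xv00 : Xv a r 0 0 = (0) := rfl
@[simp] lemma Xv01 : Xv a r 0 1 = (r) := rfl
@[simp] lemma Xv02 : Xv a r 0 2 = (a) := rfl
@[simp] lemma Xv03 : Xv a r 0 3 = (qq a r) := rfl
@[simp] lemma Xv04 : Xv a r 0 4 = (-2) := rfl
@[simp] lemma Xv10 : Xv a r 1 0 = (0) := rfl
@[simp] lemma Xv11 : Xv a r 1 1 = (r) := rfl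
@[simp] lemma Xv12 : Xv a r 1 2 = (a) := rfl
@[simp] lemma Xv13 : Xv a r 1 3 = (-qq a r) := rfl
@[simp] lemma Xv14 : Xv a r 1 4 = (-2) := rfl
@[simp] lemma Xv20 : Xv a r 2 0 = (0) := rfl
@[simp] lemma Xv21 : Xv a r 2 1 = (r) := rfl
@[simp] lemma Xv22 : Xv a r 2 2 = (a) := rfl
@[simp] lemma Xv23 : Xv a r 2 3 = (0) := rfl
@[simp] lemma Xv24 : Xv a r 2 4 = (1) := rfl
@[simp] lemma Xv30 : Xv a r 3 0 = (1/(2*qq a r)) := rfl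
@[simp] lemma Xv31 : Xv a r 3 1 = (a/(2*(a^2+r^2))) := rfl
@[simp] lemma Xv32 : Xv a r 3 2 = (-r/(2*(a^2+r^2))) := rfl
@[simp] lemma Xv33 : Xv a r 3 3 = (0) := rfl
@[simp] lemma Xv34 : Xv a r 3 4 = (0) := rfl
@[simp] lemma Xv40 : Xv a r 4 0 = (-1/(2*qq a r)) := rfl
@[simp] lemma Xv41 : Xv a r 4 1 = (a/(2*(a^2+r^2))) := rfl
@[simp] lemma Xv42 : Xv a r 4 2 = (-r/(2*(a^2+r^2))) := rfl
@[simp] lemma Xv43 : Xv a r 4 3 = (0) := rfl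
@[simp] lemma Xv44 : Xv a r 4 4 = (0) := rfl

lemma brX01 (hr : r ≠ 0) : br a r (Xv a r 0) (Xv a r 1) = (0 : L a r) := by
  have hq := (qq_pos (a := a) hr).ne'
  have hq2 := qq_sq (a := a) hr
  have hs : a^2+r^2 ≠ 0 := by positivity
  funext k; fin_cases k <;> simp <;> (try field_simp) <;> (try ring) <;> (try tauto) <;>
    first
      | linear_combination (-4*(a^2+r^2)^2) * hq2
      | linear_combination (16*(a^2+r^2)^2*(qq a r)^2) * hq2

lemma brX02 (hr : r ≠ 0) : br a r (Xv a r 0) (Xv a r 2) = (0 : L a r) := by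
  have hq := (qq_pos (a := a) hr).ne'
  have hq2 := qq_sq (a := a) hr
  have hs : a^2+r^2 ≠ 0 := by positivity
  funext k; fin_cases k <;> simp <;> (try field_simp) <;> (try ring) <;> (try tauto) <;>
    first
      | linear_combination (-4*(a^2+r^2)^2) * hq2
      | linear_combination (16*(a^2+r^2)^2*(qq a r)^2) * hq2

lemma brX03 (hr : r ≠ 0) : br a r (Xv a r 0) (Xv a r 3) = (Xv a r 0 : L a r) := by
  have hq := (qq_pos (a := a) hr).ne'
  have hq2 := qq_sq (a := a) hr
  have hs : a^2+r^2 ≠ 0 := by positivity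
  funext k; fin_cases k <;> simp <;> (try field_simp) <;> (try ring) <;> (try tauto) <;>
    first
      | linear_combination (-4*(a^2+r^2)^2) * hq2
      | linear_combination (16*(a^2+r^2)^2*(qq a r)^2) * hq2
      | linear_combination (-(a^2+r^2)) * hq2
      | linear_combination (a^2+r^2) * hq2

lemma brX04 (hr : r ≠ 0) : br a r (Xv a r 0) (Xv a r 4) = (0 : L a r) := by
  have hq := (qq_pos (a := a) hr).ne'
  have hq2 := qq_sq (a := a) hr
  have hs : a^2+r^2 ≠ 0 := by positivity
  funext k; fin_cases k <;> simp <;> (try field_simp) <;> (try ring) <;> (try tauto) <;>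
    first
      | linear_combination (-4*(a^2+r^2)^2) * hq2
      | linear_combination (16*(a^2+r^2)^2*(qq a r)^2) * hq2
      | linear_combination (-(a^2+r^2)) * hq2
      | linear_combination (a^2+r^2) * hq2

lemma brX12 (hr : r ≠ 0) : br a r (Xv a r 1) (Xv a r 2) = (0 : L a r) := by
  have hq := (qq_pos (a := a) hr).ne'
  have hq2 := qq_sq (a := a) hr
  have hs : a^2+r^2 ≠ 0 := by positivity
  funext k; fin_cases k <;> simp <;> (try field_simp) <;> (try ring) <;> (try tauto) <;>
    first
      | linear_combination (-4*(a^2+r^2)^2) * hq2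
      | linear_combination (16*(a^2+r^2)^2*(qq a r)^2) * hq2

lemma brX13 (hr : r ≠ 0) : br a r (Xv a r 1) (Xv a r 3) = (0 : L a r) := by
  have hq := (qq_pos (a := a) hr).ne'
  have hq2 := qq_sq (a := a) hr
  have hs : a^2+r^2 ≠ 0 := by positivity
  funext k; fin_cases k <;> simp <;> (try field_simp) <;> (try ring) <;> (try tauto) <;>
    first
      | linear_combination (-4*(a^2+r^2)^2) * hq2
      | linear_combination (16*(a^2+r^2)^2*(qq a r)^2) * hq2
      | linear_combination (-(a^2+r^2)) * hq2
      | linear_combination (a^2+r^2) * hq2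

lemma brX14 (hr : r ≠ 0) : br a r (Xv a r 1) (Xv a r 4) = (Xv a r 1 : L a r) := by
  have hq := (qq_pos (a := a) hr).ne'
  have hq2 := qq_sq (a := a) hr
  have hs : a^2+r^2 ≠ 0 := by positivity
  funext k; fin_cases k <;> simp <;> (try field_simp) <;> (try ring) <;> (try tauto) <;>
    first
      | linear_combination (-4*(a^2+r^2)^2) * hq2
      | linear_combination (16*(a^2+r^2)^2*(qq a r)^2) * hq2
      | linear_combination (-(a^2+r^2)) * hq2
      | linear_combination (a^2+r^2) * hq2

lemma brX23 (hr : r ≠ 0) : br a r (Xv a r 2) (Xv a r 3) = (-Xv a r 2 : L a r) := by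
  have hq := (qq_pos (a := a) hr).ne'
  have hq2 := qq_sq (a := a) hr
  have hs : a^2+r^2 ≠ 0 := by positivity
  funext k; fin_cases k <;> simp <;> (try field_simp) <;> (try ring) <;> (try tauto) <;>
    first
      | linear_combination (-4*(a^2+r^2)^2) * hq2
      | linear_combination (16*(a^2+r^2)^2*(qq a r)^2) * hq2

lemma brX24 (hr : r ≠ 0) : br a r (Xv a r 2) (Xv a r 4) = (-Xv a r 2 : L a r) := by
  have hq := (qq_pos (a := a) hr).ne'
  have hq2 := qq_sq (a := a) hr
  have hs : a^2+r^2 ≠ 0 := by positivity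
  funext k; fin_cases k <;> simp <;> (try field_simp) <;> (try ring) <;> (try tauto) <;>
    first
      | linear_combination (-4*(a^2+r^2)^2) * hq2
      | linear_combination (16*(a^2+r^2)^2*(qq a r)^2) * hq2

lemma brX34 (hr : r ≠ 0) : br a r (Xv a r 3) (Xv a r 4) = (0 : L a r) := by
  have hq := (qq_pos (a := a) hr).ne'
  have hq2 := qq_sq (a := a) hr
  have hs : a^2+r^2 ≠ 0 := by positivity
  funext k; fin_cases k <;> simp <;> (try field_simp) <;> (try ring) <;> (try tauto) <;>
    first
      | linear_combination (-4*(a^2+r^2)^2) * hq2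
      | linear_combination (16*(a^2+r^2)^2*(qq a r)^2) * hq2

end L

namespace L
variable {a r : ℝ}

@[simp] lemma eB_repr (x : L a r) (i : Fin 5) : (eB a r).repr x i = x i := rfl

@[simp] lemma hEquiv_apply (hr : r ≠ 0) (x : L a r) :
    hEquiv a r hr x = fMap a r x := rfl

def uv (a r : ℝ) (i : Fin 5) : L a r := fun j => if j = i then 1 else 0

@[simp] lemma uv_apply (i j : Fin 5) : uv a r i j = if j = i then 1 else 0 := rfl

lemma isH4 (hr : r ≠ 0) : IsH4 (L a r) := by
  have hq := (qq_pos (a := a) hr).ne'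
  have hs : a^2+r^2 ≠ 0 := by positivity
  have hXb : ∀ i, (eB a r).map (hEquiv a r hr) i = Xv a r i := by
    intro i
    rw [Module.Basis.map_apply]
    funext k
    fin_cases i <;> fin_cases k <;>
      simp [hEquiv_apply] <;> (try norm_num) <;> (try ring)
  refine ⟨(eB a r).map (hEquiv a r hr), ?_, ?_, ?_, ?_, ?_, ?_, ?_, ?_, ?_, ?_⟩ <;>
    simp only [hXb]
  · exact brX01 hr
  · exact brX02 hr
  · exact brX03 hr
  · exact brX04 hr
  · exact brX12 hr
  · exact brX13 hr
  · exact brX14 hr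
  · exact brX23 hr
  · exact brX24 hr
  · exact brX34 hr

end L

set_option maxHeartbeats 2000000 in
theorem exists_good_lie_algebra5 (a r : ℝ) (hr : r ≠ 0) :
    ∃ (V : Type) (i₁ : LieRing V) (i₂ : @LieAlgebra ℝ V _ i₁),
      @GoodLieAlgebra5 a r V i₁ i₂ := by
  refine ⟨L a r, inferInstance, inferInstance, L.solvable hr, L.eB a r,
    ?_, ?_, ?_, ?_, ?_, ?_, L.isH4 hr⟩
  · intro x y; simp [dOne, bw, wedge1]
  · intro x y; simp [dOne, bw, wedge1]; ring
  · intro x y; simp [dOne, bw, wedge1]; ring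
  · intro x y; simp [dOne, bw, wedge1]; ring
  · intro x y; simp [dOne, bw, wedge1]; ring
  · refine ⟨⟨?_, ?_, ?_, ?_, ?_⟩, ?_, ?_, ?_⟩
    · intro x; simp [bw, wedge1]; try ring
    · intro x; simp [bw, wedge1]; try ring
    · intro x; simp [bw, wedge1]; try ring
    · refine ⟨wedge22
        (fun x y => (bw (L.eB a r) 0 1 + bw (L.eB a r) 2 3) x y)
        (fun x y => (bw (L.eB a r) 0 1 + bw (L.eB a r) 2 3) x y),
        rfl, ?_, ?_, ?_, ?_, ?_, ?_⟩
      · funext x y z w; simp [wedge22, bw, wedge1]; ring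
      · funext x y z w; simp [wedge22, bw, wedge1]; ring
      · funext x y z w; simp [wedge22, bw, wedge1]; ring
      · funext x y z w; simp [wedge22, bw, wedge1]; ring
      · funext x y z w; simp [wedge22, bw, wedge1]; ring
      · intro h
        have h5 := congrFun (congrFun (congrFun (congrFun (congrFun h
          (L.uv a r 0)) (L.uv a r 1)) (L.uv a r 2)) (L.uv a r 3)) (L.uv a r 4)
        simp [wedge41, wedge22, bw, wedge1] at h5
    · intro X Y h
      have h0 := h (L.uv a r 0)
      have h1 := h (L.uv a r 1)
      have h2 := h (L.uv a r 2)
      have h3 := h (L.uv a r 3)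
      simp [bw, wedge1] at h0 h1 h2 h3 ⊢
      have h2' : Y 3 = -X 1 := by linarith
      rw [← h3, ← h0, ← h1, h2']
      nlinarith [sq_nonneg (X 0), sq_nonneg (X 1), sq_nonneg (X 2), sq_nonneg (X 3)]
    · intro x y; simp [dOne, bw, wedge1]; ring
    · intro x y z w; simp [dThree, wedge12, bw, wedge1]; ring
    · intro x y z w; simp [dThree, wedge12, bw, wedge1]; ring

end
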